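/- arXiv:0705.2024 — 5 statements merged into one kernel-verified Lean document; each statement's English description precedes it below -/
import Mathlib

section
/- Let B be an operator on a finite-dimensional Hilbert space with operator norm ‖B‖ ≤ 1, and let P, Q be orthogonal projections. If ‖BQ − P‖ ≤ ε for some ε ∈ [0,1], then ‖B†BQ − P‖ ≤ √(1−(1−ε)²) + 3ε + ε². -/
open ContinuousLinearMap

set_option maxHeartbeats 1000000

private lemma proj_pyth {E : Type*} [NormedAddCommGroup E] [InnerProductSpace ℂ E]
    [FiniteDimensional ℂ E] (Q : E →L[ℂ] E)
    (hQproj : Q ∘L Q = Q) (hQsa : adjoint Q = Q) (z : E) :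
    ‖Q z‖ ^ 2 + ‖z - Q z‖ ^ 2 = ‖z‖ ^ 2 := by
  have hinner : (inner ℂ (Q z) (z - Q z) : ℂ) = 0 := by
    have h1 := ContinuousLinearMap.adjoint_inner_left Q (z - Q z) z
    rw [hQsa] at h1
    have h2 : Q (z - Q z) = 0 := by
      have := DFunLike.congr_fun hQproj z
      simp only [ContinuousLinearMap.comp_apply] at this
      simp [map_sub, this]
    rw [h1, h2, inner_zero_right]
  have := norm_add_sq_eq_norm_sq_add_norm_sq_of_inner_eq_zero _ _ hinner
  rw [show Q z + (z - Q z) = z by abel] at this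
  linarith

private lemma proj_norm_apply_le {E : Type*} [NormedAddCommGroup E] [InnerProductSpace ℂ E]
    [FiniteDimensional ℂ E] (Q : E →L[ℂ] E)
    (hQproj : Q ∘L Q = Q) (hQsa : adjoint Q = Q) (z : E) :
    ‖Q z‖ ≤ ‖z‖ := by
  have h := proj_pyth Q hQproj hQsa z
  nlinarith [norm_nonneg (Q z), norm_nonneg z, sq_nonneg ‖z - Q z‖]

private lemma middle_bound {E : Type*} [NormedAddCommGroup E] [InnerProductSpace ℂ E]
    [FiniteDimensional ℂ E]
    (A P Q : E →L[ℂ] E) (ε : ℝ) (hε0 : 0 ≤ ε) (hε1 : ε ≤ 1)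
    (hA : ‖A‖ ≤ 1)
    (hPproj : P ∘L P = P) (hPsa : adjoint P = P)
    (hQproj : Q ∘L Q = Q) (hQsa : adjoint Q = Q)
    (h : ‖Q ∘L A - P‖ ≤ ε) :
    ‖(1 - Q) ∘L (A ∘L P)‖ ≤ Real.sqrt (1 - (1 - ε) ^ 2) := by
  have hs0 : (0:ℝ) ≤ 1 - (1 - ε) ^ 2 := by nlinarith
  apply opNorm_le_bound _ (Real.sqrt_nonneg _)
  intro x
  obtain ⟨y, hy⟩ : ∃ y, P x = y := ⟨_, rfl⟩
  obtain ⟨z, hz⟩ : ∃ z, A y = z := ⟨_, rfl⟩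
  have hyx : ‖y‖ ≤ ‖x‖ := hy ▸ proj_norm_apply_le P hPproj hPsa x
  have hzy : ‖z‖ ≤ ‖y‖ := by
    calc ‖z‖ = ‖A y‖ := by rw [hz]
      _ ≤ ‖A‖ * ‖y‖ := le_opNorm _ _
      _ ≤ 1 * ‖y‖ := by gcongr
      _ = ‖y‖ := one_mul _
  have hPy : P y = y := by
    have := DFunLike.congr_fun hPproj x
    simp only [ContinuousLinearMap.comp_apply] at this
    rw [← hy, this]
  have hQz : (1 - ε) * ‖y‖ ≤ ‖Q z‖ := by
    have hd : ‖Q z - y‖ ≤ ε * ‖y‖ := by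
      have heq : Q z - y = (Q ∘L A - P) y := by
        simp only [ContinuousLinearMap.sub_apply, ContinuousLinearMap.comp_apply, hz, hPy]
      rw [heq]
      calc ‖(Q ∘L A - P) y‖ ≤ ‖Q ∘L A - P‖ * ‖y‖ := le_opNorm _ _
        _ ≤ ε * ‖y‖ := by gcongr
    have h1 : ‖y‖ - ‖Q z‖ ≤ ‖Q z - y‖ := by
      have := norm_sub_norm_le y (Q z)
      simpa [norm_sub_rev] using this
    linarith
  have hpy : ‖Q z‖ ^ 2 + ‖z - Q z‖ ^ 2 = ‖z‖ ^ 2 := proj_pyth Q hQproj hQsa z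
  have hsq : ‖z - Q z‖ ^ 2 ≤ (1 - (1 - ε) ^ 2) * ‖x‖ ^ 2 := by
    have h1 : ((1 - ε) * ‖y‖) ^ 2 ≤ ‖Q z‖ ^ 2 := by
      apply sq_le_sq' <;> nlinarith [norm_nonneg (Q z), norm_nonneg y]
    have hz2 : ‖z‖ ^ 2 ≤ ‖y‖ ^ 2 := by nlinarith [norm_nonneg z, norm_nonneg y]
    have hy2 : ‖y‖ ^ 2 ≤ ‖x‖ ^ 2 := by nlinarith [norm_nonneg y, norm_nonneg x]
    nlinarith [mul_le_mul_of_nonneg_left hy2 hs0]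
  have hxn : ((1 - Q) ∘L (A ∘L P)) x = z - Q z := by
    simp only [ContinuousLinearMap.comp_apply, ContinuousLinearMap.sub_apply,
      ContinuousLinearMap.one_apply, hy, hz]
  rw [hxn]
  have hrw : ‖z - Q z‖ = Real.sqrt (‖z - Q z‖ ^ 2) := (Real.sqrt_sq (norm_nonneg _)).symm
  rw [hrw]
  calc Real.sqrt (‖z - Q z‖ ^ 2) ≤ Real.sqrt ((1 - (1 - ε) ^ 2) * ‖x‖ ^ 2) :=
        Real.sqrt_le_sqrt hsq
    _ = Real.sqrt (1 - (1 - ε) ^ 2) * ‖x‖ := by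
        rw [Real.sqrt_mul hs0, Real.sqrt_sq (norm_nonneg x)]

theorem stmt_0 {E : Type*} [NormedAddCommGroup E] [InnerProductSpace ℂ E]
    [FiniteDimensional ℂ E]
    (B P Q : E →L[ℂ] E) (ε : ℝ) (hε0 : 0 ≤ ε) (hε1 : ε ≤ 1)
    (hB : ‖B‖ ≤ 1)
    (hPproj : P ∘L P = P) (hPsa : adjoint P = P)
    (hQproj : Q ∘L Q = Q) (hQsa : adjoint Q = Q)
    (h : ‖B ∘L Q - P‖ ≤ ε) :
    ‖adjoint B ∘L B ∘L Q - P‖ ≤ Real.sqrt (1 - (1 - ε) ^ 2) + 3 * ε + ε ^ 2 := by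
  have hBadj : ‖adjoint B‖ ≤ 1 := by
    rw [LinearIsometryEquiv.norm_map]; exact hB
  have hadjop : ‖Q ∘L adjoint B - P‖ ≤ ε := by
    have heq : adjoint (B ∘L Q - P) = Q ∘L adjoint B - P := by
      rw [map_sub, adjoint_comp, hQsa, hPsa]
    calc ‖Q ∘L adjoint B - P‖ = ‖B ∘L Q - P‖ := by
          rw [← heq, LinearIsometryEquiv.norm_map]
      _ ≤ ε := h
  have hPnorm : ‖P‖ ≤ 1 := by
    apply opNorm_le_bound _ zero_le_one
    intro x
    rw [one_mul]
    exact proj_norm_apply_le P hPproj hPsa x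
  have hT : ‖(1 - Q) ∘L (adjoint B ∘L P)‖ ≤ Real.sqrt (1 - (1 - ε) ^ 2) :=
    middle_bound (adjoint B) P Q ε hε0 hε1 hBadj hPproj hPsa hQproj hQsa hadjop
  have key : adjoint B ∘L B ∘L Q - P
      = adjoint B ∘L (B ∘L Q - P) + (1 - Q) ∘L (adjoint B ∘L P)
        + (Q ∘L adjoint B - P) ∘L P := by
    ext x
    have hPP : P (P x) = P x := by
      have := DFunLike.congr_fun hPproj x
      simpa [ContinuousLinearMap.comp_apply] using this
    simp only [ContinuousLinearMap.comp_apply, ContinuousLinearMap.sub_apply,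
      ContinuousLinearMap.add_apply, ContinuousLinearMap.one_apply, map_sub, hPP]
    abel
  rw [key]
  have n1 : ‖adjoint B ∘L (B ∘L Q - P)‖ ≤ 1 * ε := by
    calc ‖adjoint B ∘L (B ∘L Q - P)‖ ≤ ‖adjoint B‖ * ‖B ∘L Q - P‖ := opNorm_comp_le _ _
      _ ≤ 1 * ε := by gcongr
  have n3 : ‖(Q ∘L adjoint B - P) ∘L P‖ ≤ ε * 1 := by
    calc ‖(Q ∘L adjoint B - P) ∘L P‖ ≤ ‖Q ∘L adjoint B - P‖ * ‖P‖ := opNorm_comp_le _ _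
      _ ≤ ε * 1 := by gcongr
  calc ‖adjoint B ∘L (B ∘L Q - P) + (1 - Q) ∘L (adjoint B ∘L P)
        + (Q ∘L adjoint B - P) ∘L P‖
      ≤ ‖adjoint B ∘L (B ∘L Q - P) + (1 - Q) ∘L (adjoint B ∘L P)‖
        + ‖(Q ∘L adjoint B - P) ∘L P‖ := norm_add_le _ _
    _ ≤ (‖adjoint B ∘L (B ∘L Q - P)‖ + ‖(1 - Q) ∘L (adjoint B ∘L P)‖)
        + ‖(Q ∘L adjoint B - P) ∘L P‖ := by gcongr; exact norm_add_le _ _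
    _ ≤ (1 * ε + Real.sqrt (1 - (1 - ε) ^ 2)) + ε * 1 := by gcongr
    _ ≤ Real.sqrt (1 - (1 - ε) ^ 2) + 3 * ε + ε ^ 2 := by nlinarith
end

section
/- Let B be an operator with ‖B‖ ≤ 1 and P, Q orthogonal projections with ‖BQ − P‖ ≤ ε ≤ 1. Then ‖(1−Q)B†BQ‖ ≤ √(1−(1−ε)²) + ε. -/
set_option maxHeartbeats 1000000

open ContinuousLinearMap

local notation "⟪" x ", " y "⟫" => @inner ℂ _ _ x y

section Aux
variable {E : Type*} [NormedAddCommGroup E] [InnerProductSpace ℂ E]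
  [FiniteDimensional ℂ E]

lemma aux_adj_one : adjoint (1 : E →L[ℂ] E) = 1 := by
  rw [show (1 : E →L[ℂ] E) = ContinuousLinearMap.id ℂ E from rfl, adjoint_id]

lemma aux_proj_norm_le (R : E →L[ℂ] E) (hproj : R ∘L R = R) (hsa : adjoint R = R)
    (z : E) : ‖R z‖ ≤ ‖z‖ := by
  have hRR : R (R z) = R z := by
    have := DFunLike.congr_fun hproj z; simpa using this
  have h1 : ⟪R z, R z⟫ = ⟪z, R z⟫ := by
    have := adjoint_inner_left R (R z) z
    rw [hsa, hRR] at this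
    exact this
  have h2 : ‖R z‖ ^ 2 = RCLike.re ⟪z, R z⟫ := by
    rw [← h1, inner_self_eq_norm_sq]
  have h3 : RCLike.re ⟪z, R z⟫ ≤ ‖z‖ * ‖R z‖ := by
    calc RCLike.re ⟪z, R z⟫ ≤ ‖(⟪z, R z⟫ : ℂ)‖ := RCLike.re_le_norm _
    _ ≤ ‖z‖ * ‖R z‖ := norm_inner_le_norm _ _
  nlinarith [norm_nonneg (R z), norm_nonneg z]

lemma aux_one_sub_proj (R : E →L[ℂ] E) (hproj : R ∘L R = R) (hsa : adjoint R = R) :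
    ((1 : E →L[ℂ] E) - R) ∘L (1 - R) = 1 - R ∧ adjoint ((1 : E →L[ℂ] E) - R) = 1 - R := by
  have hRR : ∀ z, R (R z) = R z := fun z => by simpa using DFunLike.congr_fun hproj z
  constructor
  · ext z
    simp only [comp_apply, sub_apply, one_apply_eq_self, map_sub, hRR]
    abel
  · rw [map_sub, aux_adj_one, hsa]

lemma aux_pos_cauchy (S : E →L[ℂ] E) (hS : S.IsPositive) (x y : E) :
    ‖(⟪x, S y⟫ : ℂ)‖ ≤ Real.sqrt (RCLike.re ⟪x, S x⟫) * Real.sqrt (RCLike.re ⟪y, S y⟫) := by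
  have hsa : adjoint S = S := hS.isSelfAdjoint.adjoint_eq
  have hswap : ∀ a b : E, (starRingEnd ℂ) (⟪b, S a⟫ : ℂ) = ⟪a, S b⟫ := by
    intro a b
    rw [inner_conj_symm]
    have := adjoint_inner_left S b a
    rw [hsa] at this
    exact this
  letI core : PreInnerProductSpace.Core ℂ E :=
    { inner := fun a b => ⟪a, S b⟫
      conj_inner_symm := fun a b => hswap a b
      re_inner_nonneg := fun a => hS.re_inner_nonneg_right a
      add_left := fun a b c => inner_add_left _ _ _
      smul_left := fun a b r => inner_smul_left _ _ _ }
  have key : ‖(⟪x, S y⟫ : ℂ)‖ * ‖(⟪y, S x⟫ : ℂ)‖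
      ≤ RCLike.re ⟪x, S x⟫ * RCLike.re ⟪y, S y⟫ :=
    @InnerProductSpace.Core.inner_mul_inner_self_le ℂ E _ _ _ core x y
  have hsym : ‖(⟪y, S x⟫ : ℂ)‖ = ‖(⟪x, S y⟫ : ℂ)‖ := by
    rw [← hswap x y, RCLike.norm_conj]
  rw [hsym] at key
  have h1 : 0 ≤ RCLike.re ⟪x, S x⟫ := hS.re_inner_nonneg_right x
  calc ‖(⟪x, S y⟫ : ℂ)‖ = Real.sqrt (‖(⟪x, S y⟫ : ℂ)‖ * ‖(⟪x, S y⟫ : ℂ)‖) := by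
        rw [Real.sqrt_mul_self (norm_nonneg _)]
  _ ≤ Real.sqrt (RCLike.re ⟪x, S x⟫ * RCLike.re ⟪y, S y⟫) := Real.sqrt_le_sqrt key
  _ = _ := Real.sqrt_mul h1 _

end Aux

theorem stmt_2 {E : Type*} [NormedAddCommGroup E] [InnerProductSpace ℂ E]
    [FiniteDimensional ℂ E]
    (B P Q : E →L[ℂ] E) (ε : ℝ) (hε1 : ε ≤ 1)
    (hB : ‖B‖ ≤ 1)
    (hPproj : P ∘L P = P) (hPsa : adjoint P = P)
    (hQproj : Q ∘L Q = Q) (hQsa : adjoint Q = Q)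
    (h : ‖B ∘L Q - P‖ ≤ ε) :
    ‖(1 - Q) ∘L adjoint B ∘L B ∘L Q‖ ≤ Real.sqrt (1 - (1 - ε) ^ 2) + ε := by
  have hε0 : 0 ≤ ε := le_trans (norm_nonneg _) h
  set c : ℝ := Real.sqrt (1 - (1 - ε) ^ 2) with hc
  have hcnn : 0 ≤ c := Real.sqrt_nonneg _
  set S : E →L[ℂ] E := 1 - adjoint B ∘L B with hSdef
  have hBle : ∀ z : E, ‖B z‖ ≤ ‖z‖ := fun z => by
    calc ‖B z‖ ≤ ‖B‖ * ‖z‖ := le_opNorm _ _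
    _ ≤ 1 * ‖z‖ := by gcongr
    _ = ‖z‖ := one_mul _
  have hSre : ∀ z : E, RCLike.re ⟪z, S z⟫ = ‖z‖ ^ 2 - ‖B z‖ ^ 2 := fun z => by
    have : (⟪z, S z⟫ : ℂ) = ⟪z, z⟫ - ⟪B z, B z⟫ := by
      simp only [hSdef, sub_apply, one_apply_eq_self, comp_apply, inner_sub_right]
      rw [adjoint_inner_right]
    rw [this, map_sub, inner_self_eq_norm_sq, inner_self_eq_norm_sq]
  have hSsa : adjoint S = S := by
    rw [hSdef, map_sub, aux_adj_one, adjoint_comp, adjoint_adjoint]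
  have hSpos : S.IsPositive := by
    constructor
    · exact isSelfAdjoint_iff_isSymmetric.mp (by rw [IsSelfAdjoint, star_eq_adjoint, hSsa])
    · intro z
      show 0 ≤ RCLike.re ⟪S z, z⟫
      have : (⟪S z, z⟫ : ℂ) = ⟪z, S z⟫ := by
        have := adjoint_inner_left S z z
        rw [hSsa] at this
        exact this
      rw [this, hSre]
      nlinarith [hBle z, norm_nonneg z, norm_nonneg (B z)]
  -- projection facts
  have hQQ : ∀ z, Q (Q z) = Q z := fun z => by simpa using DFunLike.congr_fun hQproj z
  have hPP : ∀ z, P (P z) = P z := fun z => by simpa using DFunLike.congr_fun hPproj z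
  obtain ⟨h1Qproj, h1Qsa⟩ := aux_one_sub_proj Q hQproj hQsa
  obtain ⟨h1Pproj, h1Psa⟩ := aux_one_sub_proj P hPproj hPsa
  have hQle := aux_proj_norm_le Q hQproj hQsa
  have hPle := aux_proj_norm_le P hPproj hPsa
  have h1Qle := aux_proj_norm_le _ h1Qproj h1Qsa
  have h1Ple := aux_proj_norm_le _ h1Pproj h1Psa
  -- the key pointwise bound
  have key : ∀ x y : E,
      ‖(⟪y, ((1 - Q) ∘L adjoint B ∘L B ∘L Q) x⟫ : ℂ)‖ ≤ (c + ε) * (‖y‖ * ‖x‖) := by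
    intro x y
    set u : E := (1 - Q) y with hu
    set w : E := Q (P x) with hw
    have hux : ‖u‖ ≤ ‖y‖ := h1Qle y
    -- rewrite the inner product
    have e1 : (⟪y, ((1 - Q) ∘L adjoint B ∘L B ∘L Q) x⟫ : ℂ) = ⟪B u, B (Q x)⟫ := by
      simp only [comp_apply]
      have e1a := adjoint_inner_left (1 - Q) (adjoint B (B (Q x))) y
      rw [h1Qsa] at e1a
      rw [← e1a, hu, adjoint_inner_right]
    -- decomposition
    have hdecomp : B (Q x) = (B ∘L Q - P) (x - P x) + B w := by
      simp only [sub_apply, comp_apply, map_sub, hPP, hw]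
      abel
    have e2 : (⟪B u, B (Q x)⟫ : ℂ) = ⟪B u, (B ∘L Q - P) (x - P x)⟫ + ⟪B u, B w⟫ := by
      rw [hdecomp, inner_add_right]
    -- term 2 as inner with S
    have huw : (⟪u, w⟫ : ℂ) = 0 := by
      have := adjoint_inner_left (1 - Q) w y
      rw [h1Qsa] at this
      rw [hu, this]
      have : ((1 : E →L[ℂ] E) - Q) w = 0 := by
        simp only [sub_apply, one_apply_eq_self, hw, hQQ, sub_self]
      rw [this, inner_zero_right]
    have e3 : (⟪B u, B w⟫ : ℂ) = - ⟪u, S w⟫ := by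
      have : (⟪u, S w⟫ : ℂ) = ⟪u, w⟫ - ⟪B u, B w⟫ := by
        simp only [hSdef, sub_apply, one_apply_eq_self, comp_apply, inner_sub_right]
        rw [adjoint_inner_right]
      rw [this, huw]; ring
    -- bounds
    have hb1 : ‖(⟪B u, (B ∘L Q - P) (x - P x)⟫ : ℂ)‖ ≤ ε * (‖y‖ * ‖x‖) := by
      calc ‖(⟪B u, (B ∘L Q - P) (x - P x)⟫ : ℂ)‖
          ≤ ‖B u‖ * ‖(B ∘L Q - P) (x - P x)‖ := norm_inner_le_norm _ _
      _ ≤ ‖y‖ * (ε * ‖x‖) := by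
          apply mul_le_mul
          · exact le_trans (hBle u) hux
          · calc ‖(B ∘L Q - P) (x - P x)‖ ≤ ‖B ∘L Q - P‖ * ‖x - P x‖ := le_opNorm _ _
            _ ≤ ε * ‖x‖ := by
                apply mul_le_mul h _ (norm_nonneg _) hε0
                have := h1Ple x
                simpa only [sub_apply, one_apply_eq_self] using this
          · exact norm_nonneg _
          · exact norm_nonneg _
      _ = ε * (‖y‖ * ‖x‖) := by ring
    have hBw : (1 - ε) * ‖P x‖ ≤ ‖B w‖ := by
      have h1 : ‖(B ∘L Q - P) (P x)‖ ≤ ε * ‖P x‖ := by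
        calc ‖(B ∘L Q - P) (P x)‖ ≤ ‖B ∘L Q - P‖ * ‖P x‖ := le_opNorm _ _
        _ ≤ ε * ‖P x‖ := by gcongr
      have h2 : (B ∘L Q - P) (P x) = B w - P x := by
        simp only [sub_apply, comp_apply, hPP, hw]
      rw [h2] at h1
      have := norm_sub_norm_le (P x) (B w)
      have h3 : ‖P x - B w‖ = ‖B w - P x‖ := norm_sub_rev _ _
      nlinarith [norm_nonneg (B w), norm_nonneg (P x)]
    have hcoef : 0 ≤ 1 - (1 - ε) ^ 2 := by nlinarith
    have hwS : RCLike.re ⟪w, S w⟫ ≤ (1 - (1 - ε) ^ 2) * ‖x‖ ^ 2 := by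
      rw [hSre]
      have hwle : ‖w‖ ≤ ‖P x‖ := hQle (P x)
      have hPxle : ‖P x‖ ≤ ‖x‖ := hPle x
      have h1ε : 0 ≤ 1 - ε := by linarith
      have hw2 : ‖w‖ ^ 2 ≤ ‖P x‖ ^ 2 := by nlinarith [norm_nonneg w, norm_nonneg (P x)]
      have hB2 : (1 - ε) ^ 2 * ‖P x‖ ^ 2 ≤ ‖B w‖ ^ 2 := by
        nlinarith [mul_le_mul hBw hBw (by positivity) (norm_nonneg (B w))]
      have hx2 : ‖P x‖ ^ 2 ≤ ‖x‖ ^ 2 := by nlinarith [norm_nonneg (P x), norm_nonneg x]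
      nlinarith [hw2, hB2, mul_le_mul_of_nonneg_left hx2 hcoef]
    have huS : RCLike.re ⟪u, S u⟫ ≤ ‖y‖ ^ 2 := by
      rw [hSre]
      nlinarith [norm_nonneg (B u), hux, norm_nonneg u, norm_nonneg y]
    have hb2 : ‖(⟪B u, B w⟫ : ℂ)‖ ≤ c * (‖y‖ * ‖x‖) := by
      rw [e3, norm_neg]
      calc ‖(⟪u, S w⟫ : ℂ)‖
          ≤ Real.sqrt (RCLike.re ⟪u, S u⟫) * Real.sqrt (RCLike.re ⟪w, S w⟫) :=
            aux_pos_cauchy S hSpos u w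
      _ ≤ Real.sqrt (‖y‖ ^ 2) * Real.sqrt ((1 - (1 - ε) ^ 2) * ‖x‖ ^ 2) :=
            mul_le_mul (Real.sqrt_le_sqrt huS) (Real.sqrt_le_sqrt hwS)
              (Real.sqrt_nonneg _) (Real.sqrt_nonneg _)
      _ = ‖y‖ * (c * ‖x‖) := by
            rw [Real.sqrt_sq (norm_nonneg y), Real.sqrt_mul hcoef, Real.sqrt_sq (norm_nonneg x),
              ← hc]
      _ = c * (‖y‖ * ‖x‖) := by ring
    calc ‖(⟪y, ((1 - Q) ∘L adjoint B ∘L B ∘L Q) x⟫ : ℂ)‖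
        = ‖(⟪B u, (B ∘L Q - P) (x - P x)⟫ : ℂ) + ⟪B u, B w⟫‖ := by rw [e1, e2]
    _ ≤ ‖(⟪B u, (B ∘L Q - P) (x - P x)⟫ : ℂ)‖ + ‖(⟪B u, B w⟫ : ℂ)‖ := norm_add_le _ _
    _ ≤ ε * (‖y‖ * ‖x‖) + c * (‖y‖ * ‖x‖) := add_le_add hb1 hb2
    _ = (c + ε) * (‖y‖ * ‖x‖) := by ring
  -- conclude
  apply opNorm_le_bound _ (by positivity)
  intro x
  set A : E →L[ℂ] E := (1 - Q) ∘L adjoint B ∘L B ∘L Q with hA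
  have h1 := key x (A x)
  have h2 : ‖(⟪A x, A x⟫ : ℂ)‖ = ‖A x‖ ^ 2 := by
    rw [inner_self_eq_norm_sq_to_K]
    simp [Complex.norm_real]
  rw [h2] at h1
  by_cases h0 : ‖A x‖ = 0
  · rw [h0]; positivity
  · have h0' : 0 < ‖A x‖ := lt_of_le_of_ne (norm_nonneg _) (Ne.symm h0)
    have : ‖A x‖ ^ 2 ≤ (c + ε) * ‖x‖ * ‖A x‖ := by nlinarith
    calc ‖A x‖ = ‖A x‖ ^ 2 / ‖A x‖ := by field_simp [pow_two]
    _ ≤ (c + ε) * ‖x‖ * ‖A x‖ / ‖A x‖ := by gcongr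
    _ = (c + ε) * ‖x‖ := by field_simp
end

section
/- There exist a 2×2 matrix B with ‖B‖ ≤ 1 and orthogonal projections P = Q = diag(1,0) such that ‖BQ − P‖ = ε but ‖B†BQ − P‖ ≥ √(1−(1−ε)²)·(1−ε), showing the O(√ε) error dependence is essentially optimal. Specifically, for B = [[1−ε, √(1−(1−ε)²)],[0,0]], one has ‖BQ − P‖ = ε and ‖B†BQ − P‖ ≥ (1−ε)√(1−(1−ε)²). -/
open Matrix

lemma clm_apply (A : Matrix (Fin 2) (Fin 2) ℂ) (x : EuclideanSpace ℂ (Fin 2)) (i : Fin 2) :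
    (Matrix.toEuclideanCLM (𝕜 := ℂ) A x) i = A i 0 * x 0 + A i 1 * x 1 := by
  have : (Matrix.toEuclideanCLM (𝕜 := ℂ) A x) i = A.mulVec (WithLp.equiv _ _ x) i := rfl
  rw [this]
  simp [Matrix.mulVec, dotProduct, Fin.sum_univ_two]

lemma norm_sq (x : EuclideanSpace ℂ (Fin 2)) : ‖x‖ = Real.sqrt (‖x 0‖^2 + ‖x 1‖^2) := by
  rw [EuclideanSpace.norm_eq, Fin.sum_univ_two]

theorem stmt_4 (ε : ℝ) (h0 : 0 < ε) (h1 : ε < 1) :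
    ∃ B P Q : Matrix (Fin 2) (Fin 2) ℂ,
      B = !![((1 - ε : ℝ) : ℂ), ((Real.sqrt (1 - (1 - ε) ^ 2) : ℝ) : ℂ); 0, 0] ∧
      P = !![1, 0; 0, 0] ∧ Q = P ∧
      ‖Matrix.toEuclideanCLM (𝕜 := ℂ) B‖ ≤ 1 ∧
      ‖Matrix.toEuclideanCLM (𝕜 := ℂ) (B * Q - P)‖ = ε ∧
      (1 - ε) * Real.sqrt (1 - (1 - ε) ^ 2) ≤
        ‖Matrix.toEuclideanCLM (𝕜 := ℂ) (Bᴴ * B * Q - P)‖ := by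
  set c : ℝ := 1 - ε with hc
  set s : ℝ := Real.sqrt (1 - (1 - ε) ^ 2) with hs
  have hc0 : 0 ≤ c := by linarith
  have hc1 : c < 1 := by simp [hc]; linarith
  have hs0 : 0 ≤ s := Real.sqrt_nonneg _
  have hcs : c ^ 2 + s ^ 2 = 1 := by
    rw [hs, Real.sq_sqrt (by nlinarith)]; ring
  refine ⟨_, _, _, rfl, rfl, rfl, ?_, ?_, ?_⟩
  · -- ‖B‖ ≤ 1
    apply ContinuousLinearMap.opNorm_le_bound _ zero_le_one
    intro x
    rw [norm_sq, norm_sq]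
    have h0' := clm_apply !![((c:ℝ) : ℂ), ((s:ℝ) : ℂ); 0, 0] x 0
    have h1' := clm_apply !![((c:ℝ) : ℂ), ((s:ℝ) : ℂ); 0, 0] x 1
    simp [-Matrix.ofLp_toEuclideanCLM] at h0' h1'
    rw [h0', h1']
    simp only [zero_mul, add_zero, norm_zero]
    rw [one_mul]
    apply Real.sqrt_le_sqrt
    have cauchy : ‖(c:ℂ) * x 0 + (s:ℂ) * x 1‖ ≤ c * ‖x 0‖ + s * ‖x 1‖ := by
      calc ‖(c:ℂ) * x 0 + (s:ℂ) * x 1‖ ≤ ‖(c:ℂ) * x 0‖ + ‖(s:ℂ) * x 1‖ := norm_add_le _ _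
      _ = c * ‖x 0‖ + s * ‖x 1‖ := by
        simp [Complex.norm_real, abs_of_nonneg hc0, abs_of_nonneg hs0]
    have sq' : ‖(c:ℂ) * x 0 + (s:ℂ) * x 1‖^2 ≤ (c * ‖x 0‖ + s * ‖x 1‖)^2 :=
      pow_le_pow_left₀ (norm_nonneg _) cauchy 2
    nlinarith [norm_nonneg (x 0), norm_nonneg (x 1), sq_nonneg (c * ‖x 1‖ - s * ‖x 0‖)]
  · -- = ε
    have hM : !![((c:ℝ) : ℂ), ((s:ℝ) : ℂ); 0, 0] * !![1, 0; 0, 0] - !![1, 0; 0, 0]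
        = !![(-(ε:ℂ)), 0; 0, 0] := by
      ext i j
      fin_cases i <;> fin_cases j <;>
        simp [Matrix.mul_apply, Fin.sum_univ_two, hc] <;> push_cast <;> ring
    rw [hM]
    apply le_antisymm
    · apply ContinuousLinearMap.opNorm_le_bound _ h0.le
      intro x
      rw [norm_sq, norm_sq]
      have h0' := clm_apply !![(-(ε:ℂ)), 0; 0, 0] x 0
      have h1' := clm_apply !![(-(ε:ℂ)), 0; 0, 0] x 1
      simp [-Matrix.ofLp_toEuclideanCLM] at h0' h1'
      rw [h0', h1']
      rw [show ε * Real.sqrt (‖x 0‖^2 + ‖x 1‖^2) = Real.sqrt (ε^2 * (‖x 0‖^2 + ‖x 1‖^2)) by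
        rw [Real.sqrt_mul (sq_nonneg ε), Real.sqrt_sq h0.le]]
      apply Real.sqrt_le_sqrt
      have : ‖-((ε:ℂ) * x 0)‖ = ε * ‖x 0‖ := by
        rw [norm_neg, norm_mul, Complex.norm_real, Real.norm_eq_abs, abs_of_nonneg h0.le]
      rw [this, norm_zero]
      nlinarith [norm_nonneg (x 1), sq_nonneg ε, norm_nonneg (x 0), sq_nonneg (ε * ‖x 1‖)]
    · have he : ‖(EuclideanSpace.single 0 1 : EuclideanSpace ℂ (Fin 2))‖ = 1 := by
        simp [EuclideanSpace.norm_single]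
      have := (Matrix.toEuclideanCLM (𝕜 := ℂ) !![(-(ε:ℂ)), 0; 0, 0]).le_opNorm
        (EuclideanSpace.single 0 1)
      rw [he, mul_one] at this
      refine le_trans ?_ this
      have h0' := clm_apply !![(-(ε:ℂ)), 0; 0, 0] (EuclideanSpace.single 0 1) 0
      have h1' := clm_apply !![(-(ε:ℂ)), 0; 0, 0] (EuclideanSpace.single 0 1) 1
      simp [-Matrix.ofLp_toEuclideanCLM] at h0' h1'
      rw [norm_sq, h0', h1']
      simp [abs_of_nonneg h0.le, Real.sqrt_sq h0.le]
  · -- last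
    have hM : (!![((c:ℝ) : ℂ), ((s:ℝ) : ℂ); 0, 0])ᴴ * !![((c:ℝ) : ℂ), ((s:ℝ) : ℂ); 0, 0]
        * !![1, 0; 0, 0] - !![1, 0; 0, 0]
        = !![((c:ℂ)^2 - 1), 0; ((c:ℂ) * (s:ℂ)), 0] := by
      ext i j
      fin_cases i <;> fin_cases j <;>
        simp [Matrix.mul_apply, Fin.sum_univ_two, Matrix.conjTranspose_apply] <;>
        push_cast <;> ring
    rw [hM]
    have he : ‖(EuclideanSpace.single 0 1 : EuclideanSpace ℂ (Fin 2))‖ = 1 := by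
      simp [EuclideanSpace.norm_single]
    have hle := (Matrix.toEuclideanCLM (𝕜 := ℂ)
      !![((c:ℂ)^2 - 1), 0; ((c:ℂ) * (s:ℂ)), 0]).le_opNorm
      (EuclideanSpace.single 0 1)
    rw [he, mul_one] at hle
    refine le_trans ?_ hle
    have h0' := clm_apply !![((c:ℂ)^2 - 1), 0; ((c:ℂ) * (s:ℂ)), 0]
      (EuclideanSpace.single 0 1) 0
    have h1' := clm_apply !![((c:ℂ)^2 - 1), 0; ((c:ℂ) * (s:ℂ)), 0]
      (EuclideanSpace.single 0 1) 1
    simp [-Matrix.ofLp_toEuclideanCLM] at h0' h1'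
    rw [norm_sq, h0', h1']
    have e1 : ((c:ℂ)^2 - 1) = ((c^2 - 1 : ℝ) : ℂ) := by push_cast; ring
    have e2 : ((c:ℂ) * (s:ℂ)) = ((c * s : ℝ) : ℂ) := by push_cast; ring
    rw [e1, e2, Complex.norm_real, Complex.norm_real]
    simp only [Real.norm_eq_abs, sq_abs]
    rw [Real.le_sqrt (by positivity)]
    nlinarith [sq_nonneg (c^2 - 1)]
    positivity
end

section
/- Let (p_α)_{α≥1} be a probability distribution (nonnegative, summing to 1) indexed by positive integers. Suppose there exist constants k ≥ 1, D ≥ 2, ξ > 0, and an integer m' ≥ 0 such that for all integers m > m', ∑_{α > k·D^{2m}} p_α ≤ exp(−2(m−m')/ξ). Then the Shannon entropy H = −∑_α p_α log p_α satisfies H ≤ log k + (2m'+2)·log D + ξ·log D + 4·log D + 1 + log(D²−1) + log(ξ/2 + 1). -/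
set_option maxHeartbeats 1000000


namespace Stmt8Aux

def TT (k D m' n : ℕ) : ℕ := k * D ^ (2 * (m' + n))

def lo (k D m' n : ℕ) : ℕ := if n = 0 then 0 else TT k D m' n

def SS (k D m' n : ℕ) : ℕ := TT k D m' (n + 1) - lo k D m' n

def cnt (k D m' α : ℕ) : ℕ := Nat.findGreatest (fun n => 1 ≤ n ∧ TT k D m' n ≤ α) α

lemma lt_TT {k D : ℕ} (m' : ℕ) (hk : 1 ≤ k) (hD : 2 ≤ D) (n : ℕ) : n < TT k D m' n := by
  calc n < 2 ^ n := Nat.lt_two_pow_self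
    _ ≤ D ^ n := Nat.pow_le_pow_left hD n
    _ ≤ D ^ (2 * (m' + n)) := Nat.pow_le_pow_right (by omega) (by omega)
    _ ≤ k * D ^ (2 * (m' + n)) := Nat.le_mul_of_pos_left _ hk

lemma TT_strict {k D m' : ℕ} (hk : 1 ≤ k) (hD : 2 ≤ D) {a b : ℕ} (hab : a < b) :
    TT k D m' a < TT k D m' b := by
  unfold TT
  have : D ^ (2 * (m' + a)) < D ^ (2 * (m' + b)) :=
    Nat.pow_lt_pow_right (by omega) (by omega)
  exact Nat.mul_lt_mul_of_le_of_lt (le_refl k) this (by omega)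

lemma TT_mono {k D m' : ℕ} (hk : 1 ≤ k) (hD : 2 ≤ D) {a b : ℕ} (hab : a ≤ b) :
    TT k D m' a ≤ TT k D m' b := by
  rcases Nat.eq_or_lt_of_le hab with h | h
  · exact le_of_eq (by rw [h])
  · exact (TT_strict hk hD h).le

lemma cnt_spec {k D m' α : ℕ} (h : 1 ≤ cnt k D m' α) : TT k D m' (cnt k D m' α) ≤ α := by
  have := (Nat.findGreatest_eq_iff (P := fun n => 1 ≤ n ∧ TT k D m' n ≤ α)
    (k := α) (m := cnt k D m' α)).1 rfl
  exact (this.2.1 (by omega)).2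

lemma TT_le_iff {k D m' : ℕ} (hk : 1 ≤ k) (hD : 2 ≤ D) {α n : ℕ} (hn : 1 ≤ n) :
    TT k D m' n ≤ α ↔ n ≤ cnt k D m' α := by
  constructor
  · intro h
    exact Nat.le_findGreatest (le_trans (lt_TT m' hk hD n).le h) ⟨hn, h⟩
  · intro h
    exact le_trans (TT_mono hk hD h) (cnt_spec (le_trans hn h))

lemma lt_TT_cnt_succ {k D m' : ℕ} (hk : 1 ≤ k) (hD : 2 ≤ D) (α : ℕ) :
    α < TT k D m' (cnt k D m' α + 1) := by
  by_cases h : cnt k D m' α + 1 ≤ α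
  · have := Nat.findGreatest_is_greatest (P := fun n => 1 ≤ n ∧ TT k D m' n ≤ α)
      (n := α) (k := cnt k D m' α + 1) (Nat.lt_succ_self _) h
    simp only [not_and, not_le] at this
    exact this (by omega)
  · have := lt_TT (k := k) (D := D) m' hk hD (cnt k D m' α + 1)
    omega

lemma cnt_eq_iff {k D m' : ℕ} (hk : 1 ≤ k) (hD : 2 ≤ D) {α n : ℕ} :
    cnt k D m' α = n ↔ lo k D m' n ≤ α ∧ α < TT k D m' (n + 1) := by
  constructor
  · rintro rfl
    refine ⟨?_, lt_TT_cnt_succ hk hD α⟩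
    unfold lo
    split
    · omega
    · exact cnt_spec (by omega)
  · rintro ⟨h1, h2⟩
    have hub : cnt k D m' α ≤ n := by
      by_contra hlt
      have : n + 1 ≤ cnt k D m' α := by omega
      have := (TT_le_iff hk hD (by omega)).2 this
      omega
    rcases Nat.eq_zero_or_pos n with rfl | hn
    · omega
    · have : TT k D m' n ≤ α := by unfold lo at h1; rwa [if_neg (by omega : ¬ n = 0)] at h1
      have := (TT_le_iff hk hD hn).1 this
      omega

lemma SS_pos {k D m' : ℕ} (hk : 1 ≤ k) (hD : 2 ≤ D) (n : ℕ) : 0 < SS k D m' n := by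
  unfold SS lo
  split
  · have := lt_TT (k := k) (D := D) m' hk hD (n + 1); omega
  · have h2 := TT_strict (k := k) (D := D) (m' := m') hk hD (a := n) (b := n + 1) (by omega)
    omega


lemma gibbs {x y : ℝ} (hx : 0 ≤ x) (hy : 0 < y) :
    Real.negMulLog x ≤ x * (-Real.log y) + (y - x) := by
  rcases eq_or_lt_of_le hx with rfl | hx'
  · simp [Real.negMulLog]; linarith
  · have h := Real.log_le_sub_one_of_pos (div_pos hy hx')
    rw [Real.log_div hy.ne' hx'.ne'] at h
    have h2 := mul_le_mul_of_nonneg_left h hx'.le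
    have h3 : x * (y / x - 1) = y - x := by field_simp
    rw [Real.negMulLog]
    nlinarith [h2]

lemma q_tsum {k D m' : ℕ} (hk : 1 ≤ k) (hD : 2 ≤ D) {t : ℝ} (ht0 : 0 < t) (ht1 : t < 1) :
    Summable (fun α => (1 - t) * t ^ cnt k D m' α / (SS k D m' (cnt k D m' α) : ℝ)) ∧
    ∑' α, (1 - t) * t ^ cnt k D m' α / (SS k D m' (cnt k D m' α) : ℝ) ≤ 1 := by
  classical
  set q : ℕ → ℝ := fun α => (1 - t) * t ^ cnt k D m' α / (SS k D m' (cnt k D m' α) : ℝ) with hqdef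
  have h1t : 0 < 1 - t := by linarith
  have hSSc : ∀ n, (0:ℝ) < (SS k D m' n : ℝ) := fun n => by exact_mod_cast SS_pos hk hD n
  have hq0 : ∀ α, 0 ≤ q α := fun α => le_of_lt (div_pos (mul_pos h1t (pow_pos ht0 _)) (hSSc _))
  have key : ∑' α, ENNReal.ofReal (q α) = 1 := by
    have step1 : ∀ α, ENNReal.ofReal (q α) =
        ∑' n, (if cnt k D m' α = n then ENNReal.ofReal ((1 - t) * t ^ n / (SS k D m' n : ℝ)) else 0) := by
      intro α
      rw [tsum_eq_single (cnt k D m' α) (fun n hn => if_neg (fun h => hn h.symm)), if_pos rfl]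
    have step3 : ∀ n : ℕ, (∑' α, (if cnt k D m' α = n
          then ENNReal.ofReal ((1 - t) * t ^ n / (SS k D m' n : ℝ)) else 0))
        = ENNReal.ofReal ((1 - t) * t ^ n) := by
      intro n
      rw [tsum_eq_sum (s := Finset.Ico (lo k D m' n) (TT k D m' (n + 1)))
        (fun α hα => if_neg (fun h => hα (Finset.mem_Ico.2 ((cnt_eq_iff hk hD).1 h))))]
      rw [Finset.sum_congr rfl (fun α hα => if_pos ((cnt_eq_iff hk hD).2 (Finset.mem_Ico.1 hα)))]
      rw [Finset.sum_const, Nat.card_Ico]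
      show (SS k D m' n) • ENNReal.ofReal ((1 - t) * t ^ n / (SS k D m' n : ℝ)) = _
      rw [nsmul_eq_mul, ← ENNReal.ofReal_natCast (SS k D m' n),
        ← ENNReal.ofReal_mul (by positivity)]
      congr 1
      field_simp
      exact div_self (hSSc n).ne'
    calc ∑' α, ENNReal.ofReal (q α)
        = ∑' (α : ℕ) (n : ℕ), (if cnt k D m' α = n
            then ENNReal.ofReal ((1 - t) * t ^ n / (SS k D m' n : ℝ)) else 0) := tsum_congr step1
      _ = ∑' (n : ℕ) (α : ℕ), (if cnt k D m' α = n
            then ENNReal.ofReal ((1 - t) * t ^ n / (SS k D m' n : ℝ)) else 0) := ENNReal.tsum_comm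
      _ = ∑' n : ℕ, ENNReal.ofReal ((1 - t) * t ^ n) := tsum_congr step3
      _ = ENNReal.ofReal (∑' n : ℕ, (1 - t) * t ^ n) :=
          (ENNReal.ofReal_tsum_of_nonneg (fun n => by positivity)
            ((summable_geometric_of_lt_one ht0.le ht1).mul_left _)).symm
      _ = 1 := by
          rw [tsum_mul_left, tsum_geometric_of_lt_one ht0.le ht1,
            mul_inv_cancel₀ h1t.ne']
          exact ENNReal.ofReal_one
  have hne : ∑' α, ENNReal.ofReal (q α) ≠ ⊤ := by rw [key]; exact ENNReal.one_ne_top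
  have hqS : Summable q := by
    have h := ENNReal.summable_toReal hne
    exact h.congr fun α => ENNReal.toReal_ofReal (hq0 α)
  refine ⟨hqS, ?_⟩
  rw [← ENNReal.ofReal_le_one, ENNReal.ofReal_tsum_of_nonneg hq0 hqS, key]

lemma p_cnt {k D m' : ℕ} (hk : 1 ≤ k) (hD : 2 ≤ D) (p : ℕ → ℝ) (hpos : ∀ α, 0 ≤ p α)
    (hsum : Summable p) {t : ℝ} (ht0 : 0 < t) (ht1 : t < 1)
    (htail : ∀ n, 1 ≤ n → (∑' α, if TT k D m' n ≤ α then p α else 0) ≤ t ^ n) :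
    Summable (fun α => p α * (cnt k D m' α : ℝ)) ∧
    ∑' α, p α * (cnt k D m' α : ℝ) ≤ (1 - t)⁻¹ - 1 := by
  classical
  have h1t : 0 < 1 - t := by linarith
  have hcnt : ∀ α, ((cnt k D m' α : ℕ) : ENNReal)
      = ∑' n, (if 1 ≤ n ∧ TT k D m' n ≤ α then (1:ENNReal) else 0) := by
    intro α
    rw [tsum_eq_sum (s := Finset.Icc 1 (cnt k D m' α))
      (fun n hn => if_neg (fun h => hn (Finset.mem_Icc.2 ⟨h.1, (TT_le_iff hk hD h.1).1 h.2⟩)))]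
    rw [Finset.sum_congr rfl (fun n hn => if_pos
      ⟨(Finset.mem_Icc.1 hn).1, (TT_le_iff hk hD (Finset.mem_Icc.1 hn).1).2 (Finset.mem_Icc.1 hn).2⟩)]
    rw [Finset.sum_const, Nat.card_Icc]
    simp
  have inner : ∀ n : ℕ, (∑' α, (if 1 ≤ n ∧ TT k D m' n ≤ α then ENNReal.ofReal (p α) else 0))
      ≤ ENNReal.ofReal (if n = 0 then 0 else t ^ n) := by
    intro n
    rcases Nat.eq_zero_or_pos n with rfl | hn
    · simp
    · have hsub : Summable (fun α => if TT k D m' n ≤ α then p α else 0) := by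
        refine Summable.of_nonneg_of_le (fun α => ?_) (fun α => ?_) hsum
        · split_ifs; exacts [hpos α, le_rfl]
        · split_ifs; exacts [le_rfl, hpos α]
      have he : ∀ α, (if 1 ≤ n ∧ TT k D m' n ≤ α then ENNReal.ofReal (p α) else 0)
          = ENNReal.ofReal (if TT k D m' n ≤ α then p α else 0) := by
        intro α
        split_ifs with h1 h2 <;> simp_all <;> omega
      rw [tsum_congr he, ← ENNReal.ofReal_tsum_of_nonneg
        (fun α => by split_ifs; exacts [hpos α, le_rfl]) hsub, if_neg (by omega)]
      exact ENNReal.ofReal_le_ofReal (htail n hn)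
  have hsumgeo : Summable (fun n : ℕ => t ^ n) := summable_geometric_of_lt_one ht0.le ht1
  have hind : Summable (fun n : ℕ => if n = 0 then (1:ℝ) else 0) :=
    summable_of_ne_finset_zero (s := {0}) (fun b hb => by simp at hb; simp [hb])
  have hS2 : Summable (fun n : ℕ => if n = 0 then (0:ℝ) else t ^ n) := by
    refine Summable.of_nonneg_of_le (fun n => ?_) (fun n => ?_) hsumgeo
    · split_ifs; exacts [le_rfl, by positivity]
    · split_ifs; exacts [by positivity, le_rfl]
  have htsum0 : (∑' n : ℕ, (if n = 0 then (0:ℝ) else t ^ n)) = (1 - t)⁻¹ - 1 := by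
    have hfe : (fun n : ℕ => if n = 0 then (0:ℝ) else t ^ n)
        = fun n => t ^ n - (if n = 0 then 1 else 0) := by
      funext n; split_ifs with h <;> simp [h]
    rw [hfe, Summable.tsum_sub hsumgeo hind, tsum_geometric_of_lt_one ht0.le ht1, (by simpa using tsum_ite_eq (0:ℕ) (fun _ => (1:ℝ)) : (∑' b : ℕ, if b = 0 then (1:ℝ) else 0) = 1)]
  have big : ∑' α, ENNReal.ofReal (p α * (cnt k D m' α : ℝ)) ≤ ENNReal.ofReal ((1 - t)⁻¹ - 1) := by
    have e1 : ∀ α, ENNReal.ofReal (p α * (cnt k D m' α : ℝ))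
        = ∑' n, (if 1 ≤ n ∧ TT k D m' n ≤ α then ENNReal.ofReal (p α) else 0) := by
      intro α
      rw [ENNReal.ofReal_mul (hpos α), ENNReal.ofReal_natCast, hcnt α, ← ENNReal.tsum_mul_left]
      exact tsum_congr fun n => by split_ifs <;> simp
    calc ∑' α, ENNReal.ofReal (p α * (cnt k D m' α : ℝ))
        = ∑' (α : ℕ) (n : ℕ), (if 1 ≤ n ∧ TT k D m' n ≤ α then ENNReal.ofReal (p α) else 0) :=
          tsum_congr e1
      _ = ∑' (n : ℕ) (α : ℕ), (if 1 ≤ n ∧ TT k D m' n ≤ α then ENNReal.ofReal (p α) else 0) :=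
          ENNReal.tsum_comm
      _ ≤ ∑' n : ℕ, ENNReal.ofReal (if n = 0 then 0 else t ^ n) := ENNReal.tsum_le_tsum inner
      _ = ENNReal.ofReal (∑' n : ℕ, (if n = 0 then (0:ℝ) else t ^ n)) :=
          (ENNReal.ofReal_tsum_of_nonneg (fun n => by split_ifs <;> positivity) hS2).symm
      _ = ENNReal.ofReal ((1 - t)⁻¹ - 1) := by rw [htsum0]
  have hne : ∑' α, ENNReal.ofReal (p α * (cnt k D m' α : ℝ)) ≠ ⊤ :=
    ne_top_of_le_ne_top ENNReal.ofReal_ne_top big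
  have hnn : ∀ α, 0 ≤ p α * (cnt k D m' α : ℝ) :=
    fun α => mul_nonneg (hpos α) (Nat.cast_nonneg _)
  have hS : Summable (fun α => p α * (cnt k D m' α : ℝ)) := by
    have h := ENNReal.summable_toReal hne
    exact h.congr fun α => ENNReal.toReal_ofReal (hnn α)
  refine ⟨hS, ?_⟩
  have hb : (0:ℝ) ≤ (1 - t)⁻¹ - 1 := by
    have hx : (1 - t) * (1 - t)⁻¹ = 1 := mul_inv_cancel₀ h1t.ne'
    nlinarith [inv_nonneg.2 h1t.le]
  rw [← ENNReal.ofReal_le_ofReal_iff hb, ENNReal.ofReal_tsum_of_nonneg hnn hS]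
  exact big


lemma SS_cast_zero {k D m' : ℕ} : (SS k D m' 0 : ℝ) = (k : ℝ) * (D : ℝ) ^ (2 * (m' + 1)) := by
  unfold SS lo TT
  rw [if_pos rfl, Nat.sub_zero]
  push_cast
  ring

lemma SS_cast_pos {k D m' : ℕ} (hk : 1 ≤ k) (hD : 2 ≤ D) {n : ℕ} (hn : 1 ≤ n) :
    (SS k D m' n : ℝ) = (k : ℝ) * (D : ℝ) ^ (2 * (m' + n)) * ((D : ℝ) ^ 2 - 1) := by
  unfold SS lo
  rw [if_neg (by omega), Nat.cast_sub (TT_mono hk hD (by omega))]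
  unfold TT
  push_cast
  have h : 2 * (m' + (n + 1)) = 2 * (m' + n) + 2 := by ring
  rw [h, pow_add]
  ring

end Stmt8Aux

theorem stmt_8 (p : ℕ → ℝ) (hpos : ∀ α, 0 ≤ p α) (hsum : Summable p)
    (hone : ∑' α, p α = 1)
    (k D m' : ℕ) (hk : 1 ≤ k) (hD : 2 ≤ D) (ξ : ℝ) (hξ : 0 < ξ)
    (htail : ∀ m : ℕ, m' < m →
      (∑' α, if k * D ^ (2 * m) ≤ α then p α else 0) ≤
        Real.exp (-2 * ((m : ℝ) - m') / ξ)) :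
    (∑' α, Real.negMulLog (p α)) ≤
      Real.log k + (2 * (m' : ℝ) + 2) * Real.log D + ξ * Real.log D +
        4 * Real.log D + 1 + Real.log ((D : ℝ) ^ 2 - 1) + Real.log (ξ / 2 + 1) := by
  classical
  have hD1 : (1:ℝ) ≤ (D:ℝ) := by exact_mod_cast (by omega : 1 ≤ D)
  have hDR : (2:ℝ) ≤ (D:ℝ) := by exact_mod_cast hD
  have hlogD : 0 ≤ Real.log D := Real.log_nonneg hD1
  have hlogk : 0 ≤ Real.log k := Real.log_nonneg (by exact_mod_cast hk)
  have hD2 : (1:ℝ) ≤ (D:ℝ) ^ 2 - 1 := by nlinarith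
  have hlogD2 : 0 ≤ Real.log ((D:ℝ) ^ 2 - 1) := Real.log_nonneg hD2
  have hlogξ : 0 ≤ Real.log (ξ / 2 + 1) := Real.log_nonneg (by linarith)
  have hm'0 : (0:ℝ) ≤ 2 * (m':ℝ) + 2 := by positivity
  by_cases hsummH : Summable (fun α => Real.negMulLog (p α))
  swap
  · rw [tsum_eq_zero_of_not_summable hsummH]
    have h1 : 0 ≤ ξ * Real.log D := mul_nonneg hξ.le hlogD
    have h2 : 0 ≤ (2 * (m':ℝ) + 2) * Real.log D := mul_nonneg hm'0 hlogD
    linarith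
  set t := Real.exp (-(2/ξ)) with htdef
  have ht0 : 0 < t := Real.exp_pos _
  have ht1 : t < 1 := by
    rw [htdef]
    rw [Real.exp_lt_one_iff]
    have : 0 < 2/ξ := by positivity
    linarith
  have h1t : 0 < 1 - t := by linarith
  have htu : t + (2/ξ) * t ≤ 1 := by
    have h := Real.add_one_le_exp (2/ξ)
    have h2 : (2/ξ + 1) * t ≤ Real.exp (2/ξ) * t := mul_le_mul_of_nonneg_right h ht0.le
    have h3 : Real.exp (2/ξ) * t = 1 := by
      rw [htdef, ← Real.exp_add]
      simp
    rw [h3] at h2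
    nlinarith
  have hinv : (1 - t)⁻¹ ≤ ξ/2 + 1 := by
    have hmul : ξ * t + 2 * t ≤ ξ := by
      have h4 : ξ * (2/ξ) = 2 := by field_simp
      nlinarith [mul_le_mul_of_nonneg_left htu hξ.le]
    have h1 : (1:ℝ) ≤ (ξ/2 + 1) * (1 - t) := by nlinarith
    rw [inv_eq_one_div, div_le_iff₀ h1t]
    linarith
  have htail' : ∀ n, 1 ≤ n →
      (∑' α, if Stmt8Aux.TT k D m' n ≤ α then p α else 0) ≤ t ^ n := by
    intro n hn
    have h := htail (m' + n) (by omega)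
    have he : Real.exp (-2 * (((m' + n : ℕ) : ℝ) - (m' : ℝ)) / ξ) = t ^ n := by
      rw [htdef, ← Real.exp_nat_mul]
      congr 1
      push_cast
      ring
    rw [he] at h
    exact le_trans (le_of_eq (by simp [Stmt8Aux.TT]; congr!)) h
  obtain ⟨hqS, hqle⟩ := Stmt8Aux.q_tsum (k := k) (D := D) (m' := m') hk hD ht0 ht1
  obtain ⟨hpcS, hpcle⟩ := Stmt8Aux.p_cnt hk hD p hpos hsum ht0 ht1 htail'
  set c : ℕ → ℕ := Stmt8Aux.cnt k D m' with hcdef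
  set q : ℕ → ℝ := fun α => (1 - t) * t ^ c α / (Stmt8Aux.SS k D m' (c α) : ℝ) with hqdef
  set A0 : ℝ := Real.log k + (2 * (m':ℝ) + 2) * Real.log D + Real.log ((D:ℝ) ^ 2 - 1) with hA0def
  set B : ℝ := 2 * Real.log D + 2/ξ with hBdef
  set C0 : ℝ := A0 - Real.log (1 - t) with hC0def
  have hSSc : ∀ n, (0:ℝ) < (Stmt8Aux.SS k D m' n : ℝ) := fun n => by
    exact_mod_cast Stmt8Aux.SS_pos hk hD n
  have hq0 : ∀ α, 0 < q α := fun α => div_pos (mul_pos h1t (pow_pos ht0 _)) (hSSc _)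
  have hlogSS : ∀ n, Real.log (Stmt8Aux.SS k D m' n : ℝ) ≤ A0 + 2 * Real.log D * n := by
    intro n
    rcases Nat.eq_zero_or_pos n with rfl | hn
    · rw [Stmt8Aux.SS_cast_zero, Real.log_mul (by positivity) (by positivity), Real.log_pow]
      push_cast
      nlinarith
    · rw [Stmt8Aux.SS_cast_pos hk hD hn, Real.log_mul (by positivity) (by nlinarith),
        Real.log_mul (by positivity) (by positivity), Real.log_pow]
      push_cast
      nlinarith [mul_nonneg hlogD (Nat.cast_nonneg (α := ℝ) n)]
  have hL : ∀ α, -Real.log (q α) ≤ C0 + B * (c α : ℝ) := by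
    intro α
    rw [hqdef]
    rw [Real.log_div (by positivity) (hSSc _).ne', Real.log_mul h1t.ne' (pow_pos ht0 _).ne',
      Real.log_pow, htdef, Real.log_exp]
    have := hlogSS (c α)
    rw [hC0def, hBdef]
    have hcnn : (0:ℝ) ≤ (c α : ℝ) := Nat.cast_nonneg _
    nlinarith
  have point : ∀ α, Real.negMulLog (p α) ≤ C0 * p α + B * (p α * (c α : ℝ)) + (q α - p α) := by
    intro α
    have g := Stmt8Aux.gibbs (hpos α) (hq0 α)
    have m := mul_le_mul_of_nonneg_left (hL α) (hpos α)
    nlinarith [g, m]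
  have hrS : Summable (fun α => C0 * p α + B * (p α * (c α : ℝ)) + (q α - p α)) :=
    ((hsum.mul_left C0).add (hpcS.mul_left B)).add (hqS.sub hsum)
  have main := Summable.tsum_le_tsum point hsummH hrS
  rw [Summable.tsum_add ((hsum.mul_left C0).add (hpcS.mul_left B)) (hqS.sub hsum),
      Summable.tsum_add (hsum.mul_left C0) (hpcS.mul_left B),
      Summable.tsum_sub hqS hsum, tsum_mul_left, tsum_mul_left, hone] at main
  have hB : 0 ≤ B := by rw [hBdef]; positivity
  have hpc2 : ∑' α, p α * (c α : ℝ) ≤ ξ/2 := le_trans hpcle (by linarith)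
  have hlog1t : -Real.log (1 - t) ≤ Real.log (ξ/2 + 1) := by
    rw [← Real.log_inv]
    exact Real.log_le_log (by positivity) hinv
  have hBmul : B * (ξ/2) = ξ * Real.log D + 1 := by
    rw [hBdef]
    field_simp
  have hstep : B * (∑' α, p α * (c α : ℝ)) ≤ ξ * Real.log D + 1 := by
    calc B * (∑' α, p α * (c α : ℝ)) ≤ B * (ξ/2) := mul_le_mul_of_nonneg_left hpc2 hB
      _ = ξ * Real.log D + 1 := hBmul
  rw [hC0def, hA0def] at main
  linarith [main, hqle, hstep, hlog1t, hlogD]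
end

section
/- Let ρ be a positive semidefinite operator on H_A ⊗ H_B that is a convex mixture of pure states each of Schmidt rank at most k, normalized with tr ρ = 1, and let ψ₀ be a unit vector with ⟨ψ₀, ρ ψ₀⟩ ≥ 1 − δ. Then the squared Schmidt coefficients |A_α|² of ψ₀ (ordered non-increasingly) satisfy ∑_{α > k} |A_α|² ≤ δ. -/
open Matrix Finset
open scoped InnerProductSpace ComplexConjugate

/-- Elementary tensor of two vectors on the product index set. -/
def tensV {m n : Type*} (u : m → ℂ) (v : n → ℂ) : m × n → ℂ :=
  fun p => u p.1 * v p.2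

def toE {ι : Type*} (f : ι → ℂ) : EuclideanSpace ℂ ι := WithLp.toLp 2 f

lemma inner_toE {ι : Type*} [Fintype ι] (a b : ι → ℂ) : ⟪toE a, toE b⟫_ℂ = star a ⬝ᵥ b := by
  simp only [PiLp.inner_apply, RCLike.inner_apply, toE, PiLp.toLp_apply, dotProduct,
    Pi.star_apply, RCLike.star_def]
  exact sum_congr rfl fun i _ => by ring

lemma toE_sum {ι : Type*} {r : ℕ} (A : Fin r → ℂ) (w : Fin r → ι → ℂ) :
    toE (∑ α, A α • w α) = ∑ α, A α • toE (w α) := by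
  simp [toE]

lemma inner_tensV {m n : Type*} [Fintype m] [Fintype n]
    (a u : EuclideanSpace ℂ m) (b v : EuclideanSpace ℂ n) :
    ⟪toE (tensV a b), toE (tensV u v)⟫_ℂ = ⟪a, u⟫_ℂ * ⟪b, v⟫_ℂ := by
  simp only [PiLp.inner_apply, RCLike.inner_apply, tensV, toE, PiLp.toLp_apply, _root_.map_mul, RCLike.star_def,
    Fintype.sum_prod_type, Finset.sum_mul_sum]
  exact sum_congr rfl fun i _ => sum_congr rfl fun j _ => by ring

lemma inner_sum_tens {m n : Type*} [Fintype m] [Fintype n] {r : ℕ}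
    (A C : Fin r → ℂ) (w z : Fin r → EuclideanSpace ℂ m)
    (v : Fin r → EuclideanSpace ℂ n) (hv : Orthonormal ℂ v) :
    ⟪∑ α, A α • toE (tensV (w α) (v α)), ∑ α, C α • toE (tensV (z α) (v α))⟫_ℂ
      = ∑ α, conj (A α) * C α * ⟪w α, z α⟫_ℂ := by
  have hite := (orthonormal_iff_ite (𝕜 := ℂ)).mp hv
  simp only [sum_inner, inner_sum, inner_smul_left, inner_smul_right, inner_tensV, hite,
    mul_ite, mul_one, mul_zero, ite_mul, zero_mul, Finset.sum_ite_eq, Finset.sum_ite_eq',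
    mem_univ, if_true]
  exact sum_congr rfl fun α _ => by ring

lemma card_filter_lt (r k : ℕ) (hkr : k ≤ r) :
    (univ.filter (fun α : Fin r => (α : ℕ) < k)).card = k := by
  have : univ.filter (fun α : Fin r => (α : ℕ) < k) = Finset.map (Fin.castLEEmb hkr) univ := by
    ext α
    simp only [mem_filter, mem_univ, true_and, Finset.mem_map, Fin.castLEEmb_apply]
    constructor
    · intro h; exact ⟨⟨α, h⟩, Fin.ext rfl⟩
    · rintro ⟨b, -, rfl⟩; exact b.isLt
  rw [this, Finset.card_map, Finset.card_univ, Fintype.card_fin]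

lemma majorize {r k : ℕ} (a t : Fin r → ℝ) (ha0 : ∀ α, 0 ≤ a α)
    (hmono : ∀ α β : Fin r, α ≤ β → a β ≤ a α)
    (ht0 : ∀ α, 0 ≤ t α) (ht1 : ∀ α, t α ≤ 1)
    (hsum : ∑ α, t α ≤ (k : ℝ)) :
    ∑ α, t α * a α ≤ ∑ α ∈ univ.filter (fun α : Fin r => (α : ℕ) < k), a α := by
  by_cases hkr : r ≤ k
  · have hfilter : univ.filter (fun α : Fin r => (α : ℕ) < k) = univ := by
      ext α; simp [lt_of_lt_of_le α.isLt hkr]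
    rw [hfilter]
    exact Finset.sum_le_sum fun α _ => by nlinarith [ht0 α, ht1 α, ha0 α]
  · push_neg at hkr
    set κ : Fin r := ⟨k, hkr⟩ with hκ
    set p : Fin r → Prop := fun α => (α : ℕ) < k with hp
    have hcard : (univ.filter p).card = k := card_filter_lt r k hkr.le
    have hsplit := Finset.sum_filter_add_sum_filter_not univ p (fun α => t α * a α)
    have hsplit2 := Finset.sum_filter_add_sum_filter_not univ p t
    have h1 : ∑ α ∈ univ.filter (fun α => ¬ p α), t α * a α
        ≤ a κ * ∑ α ∈ univ.filter (fun α => ¬ p α), t α := by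
      rw [Finset.mul_sum]
      refine Finset.sum_le_sum fun α hα => ?_
      have hk : k ≤ (α : ℕ) := by
        simp only [mem_filter, hp, not_lt] at hα; exact hα.2
      have : a α ≤ a κ := hmono κ α hk
      nlinarith [ht0 α]
    have h2 : ∑ α ∈ univ.filter (fun α => ¬ p α), t α ≤ (k : ℝ) - ∑ α ∈ univ.filter p, t α := by
      linarith
    have haκ : 0 ≤ a κ := ha0 κ
    have h3 : ∑ α, t α * a α ≤ ∑ α ∈ univ.filter p, t α * a α
        + a κ * ((k : ℝ) - ∑ α ∈ univ.filter p, t α) := by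
      nlinarith [h1, h2]
    have h4 : ∑ α ∈ univ.filter p, t α * a α + a κ * ((k : ℝ) - ∑ α ∈ univ.filter p, t α)
        = ∑ α ∈ univ.filter p, (t α * a α + a κ * (1 - t α)) := by
      simp only [mul_sub, mul_one, Finset.sum_add_distrib, Finset.sum_sub_distrib,
        Finset.sum_const, hcard, nsmul_eq_mul, Finset.mul_sum]
      ring
    have h5 : ∑ α ∈ univ.filter p, (t α * a α + a κ * (1 - t α)) ≤ ∑ α ∈ univ.filter p, a α := by
      refine Finset.sum_le_sum fun α hα => ?_
      have hαk : (α : ℕ) < k := by simpa [hp] using (Finset.mem_filter.mp hα).2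
      have : a κ ≤ a α := hmono α κ hαk.le
      nlinarith [ht0 α, ht1 α]
    calc ∑ α, t α * a α ≤ _ := h3
      _ = _ := h4
      _ ≤ _ := h5

set_option maxHeartbeats 1000000 in
lemma key_bound {m n : Type*} [Fintype m] [Fintype n] {r k : ℕ}
    (A : Fin r → ℂ)
    (u : Fin r → EuclideanSpace ℂ m) (v : Fin r → EuclideanSpace ℂ n)
    (hu : Orthonormal ℂ u) (hv : Orthonormal ℂ v)
    (hord : ∀ α β : Fin r, α ≤ β → ‖A β‖ ≤ ‖A α‖)
    (φ : EuclideanSpace ℂ (m × n))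
    (B : Fin k → ℂ) (x : Fin k → EuclideanSpace ℂ m) (y : Fin k → EuclideanSpace ℂ n)
    (hφ : φ = ∑ β, B β • toE (tensV (x β) (y β))) :
    ‖⟪φ, ∑ α, A α • toE (tensV (u α) (v α))⟫_ℂ‖ ^ 2
      ≤ ‖φ‖ ^ 2 * ∑ α ∈ univ.filter (fun α : Fin r => (α : ℕ) < k), ‖A α‖ ^ 2 := by
  classical
  set W : Submodule ℂ (EuclideanSpace ℂ m) := Submodule.span ℂ (Set.range x) with hW
  set d : ℕ := Module.finrank ℂ W with hd
  have hdk : d ≤ k := by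
    have := finrank_range_le_card (R := ℂ) x
    simpa [Set.finrank, Fintype.card_fin] using this
  set b : OrthonormalBasis (Fin d) ℂ W := stdOrthonormalBasis ℂ W with hb
  set f : Fin d → EuclideanSpace ℂ m := fun j => (b j : EuclideanSpace ℂ m) with hf
  have hfO : Orthonormal ℂ f := by
    rw [orthonormal_iff_ite]
    intro i j
    have := (orthonormal_iff_ite (𝕜 := ℂ)).mp b.orthonormal i j
    rwa [Submodule.coe_inner] at this
  set Q : EuclideanSpace ℂ m → EuclideanSpace ℂ m :=
    fun z => (W.orthogonalProjectionOnto z : EuclideanSpace ℂ m) with hQ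
  have hQx : ∀ β, Q (x β) = x β := fun β =>
    W.starProjection_eq_self_iff.2 (Submodule.subset_span (Set.mem_range_self β))
  have hQexp : ∀ z, Q z = ∑ j, ⟪f j, z⟫_ℂ • f j := by
    intro z
    have := b.orthogonalProjectionOnto_apply_eq_sum (𝕜 := ℂ) z
    have hcoe := congrArg (Submodule.subtype W) this
    simpa [hQ, hf, Submodule.coe_inner, map_sum] using hcoe
  set χ : EuclideanSpace ℂ (m × n) := ∑ α, A α • toE (tensV (Q (u α)) (v α)) with hχ
  set ψ : EuclideanSpace ℂ (m × n) := ∑ α, A α • toE (tensV (u α) (v α)) with hψ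
  -- step 1
  have step1 : ⟪φ, ψ⟫_ℂ = ⟪φ, χ⟫_ℂ := by
    rw [hφ, sum_inner, sum_inner]
    refine sum_congr rfl fun β _ => ?_
    rw [inner_smul_left, inner_smul_left]
    congr 1
    rw [hψ, hχ, inner_sum, inner_sum]
    refine sum_congr rfl fun α _ => ?_
    rw [inner_smul_right, inner_smul_right, inner_tensV, inner_tensV]
    have : ⟪x β, Q (u α)⟫_ℂ = ⟪Q (x β), u α⟫_ℂ :=
      (W.inner_starProjection_left_eq_right (x β) (u α)).symm
    rw [this, hQx]
  -- coefficients
  set t : Fin r → ℝ := fun α => ‖Q (u α)‖ ^ 2 with ht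
  have step3 : ‖χ‖ ^ 2 = ∑ α, t α * ‖A α‖ ^ 2 := by
    have h := inner_sum_tens A A (fun α => Q (u α)) (fun α => Q (u α)) v hv
    rw [← hχ] at h
    have h2 : ⟪χ, χ⟫_ℂ = ((∑ α, t α * ‖A α‖ ^ 2 : ℝ) : ℂ) := by
      rw [h]
      push_cast
      refine sum_congr rfl fun α _ => ?_
      rw [RCLike.conj_mul, inner_self_eq_norm_sq_to_K]
      norm_cast
      simp only [ht]
      rw [mul_comm]
      rfl
    have h3 : ((‖χ‖ ^ 2 : ℝ) : ℂ) = ((∑ α, t α * ‖A α‖ ^ 2 : ℝ) : ℂ) := by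
      rw [← h2, inner_self_eq_norm_sq_to_K]
      norm_cast
    exact Complex.ofReal_inj.mp h3
  have hQnorm : ∀ z, ‖Q z‖ ≤ ‖z‖ := by
    intro z
    have h1 : ‖(W.orthogonalProjectionOnto) z‖ ≤ ‖(W.orthogonalProjectionOnto)‖ * ‖z‖ :=
      (W.orthogonalProjectionOnto).le_opNorm z
    have h2 : ‖(W.orthogonalProjectionOnto)‖ ≤ 1 := Submodule.orthogonalProjectionOnto_norm_le W
    have h0 : ‖Q z‖ = ‖(W.orthogonalProjectionOnto) z‖ := rfl
    nlinarith [norm_nonneg z]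
  have step4 : ∀ α, t α ≤ 1 := by
    intro α
    have h1 := hQnorm (u α)
    have h2 : ‖u α‖ = 1 := hu.1 α
    simp only [ht]
    nlinarith [norm_nonneg (Q (u α))]
  have hQcoef : ∀ z, (‖Q z‖ ^ 2 : ℝ) = ∑ j, ‖⟪f j, z⟫_ℂ‖ ^ 2 := by
    intro z
    have e : ⟪Q z, Q z⟫_ℂ = ∑ j, (starRingEnd ℂ) (⟪f j, z⟫_ℂ) * ⟪f j, z⟫_ℂ := by
      rw [hQexp z]
      exact hfO.inner_sum (fun j => ⟪f j, z⟫_ℂ) (fun j => ⟪f j, z⟫_ℂ) univ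
    calc ‖Q z‖ ^ 2 = RCLike.re ⟪Q z, Q z⟫_ℂ := (inner_self_eq_norm_sq (Q z)).symm
      _ = ∑ j, ‖⟪f j, z⟫_ℂ‖ ^ 2 := by
          rw [e, map_sum]
          exact sum_congr rfl fun j _ => by rw [RCLike.conj_mul]; norm_cast
  have step5 : ∑ α, t α ≤ (k : ℝ) := by
    have hswap : ∑ α, t α = ∑ j, ∑ α, ‖⟪u α, f j⟫_ℂ‖ ^ 2 := by
      rw [Finset.sum_comm]
      refine sum_congr rfl fun α _ => ?_
      simp only [ht]
      rw [hQcoef (u α)]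
      exact sum_congr rfl fun j _ => by rw [norm_inner_symm]
    have hbes : ∀ j, ∑ α, ‖⟪u α, f j⟫_ℂ‖ ^ 2 ≤ 1 := by
      intro j
      have h := hu.sum_inner_products_le (f j) (s := univ)
      have hfj : ‖f j‖ = 1 := hfO.1 j
      rw [hfj] at h
      simpa using h
    calc ∑ α, t α = ∑ j, ∑ α, ‖⟪u α, f j⟫_ℂ‖ ^ 2 := hswap
      _ ≤ ∑ _j : Fin d, (1 : ℝ) := Finset.sum_le_sum fun j _ => hbes j
      _ = (d : ℝ) := by simp
      _ ≤ (k : ℝ) := by exact_mod_cast hdk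
  have ht0 : ∀ α, (0 : ℝ) ≤ t α := fun α => by rw [ht]; positivity
  have hmaj := majorize (fun α => ‖A α‖ ^ 2) t
    (fun α => by positivity)
    (fun α β hab => by exact pow_le_pow_left₀ (norm_nonneg _) (hord α β hab) 2)
    ht0 step4 step5
  have hcs : ‖⟪φ, χ⟫_ℂ‖ ≤ ‖φ‖ * ‖χ‖ := norm_inner_le_norm φ χ
  calc ‖⟪φ, ψ⟫_ℂ‖ ^ 2 = ‖⟪φ, χ⟫_ℂ‖ ^ 2 := by rw [step1]
    _ ≤ (‖φ‖ * ‖χ‖) ^ 2 := pow_le_pow_left₀ (norm_nonneg _) hcs 2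
    _ = ‖φ‖ ^ 2 * ‖χ‖ ^ 2 := by ring
    _ = ‖φ‖ ^ 2 * ∑ α, t α * ‖A α‖ ^ 2 := by rw [step3]
    _ ≤ ‖φ‖ ^ 2 * ∑ α ∈ univ.filter (fun α : Fin r => (α : ℕ) < k), ‖A α‖ ^ 2 := by
        exact mul_le_mul_of_nonneg_left hmaj (by positivity)

lemma quad {ι : Type*} [Fintype ι] {G : ℕ} (c : Fin G → ℂ) (w : Fin G → ι → ℂ) (a : ι → ℂ) :
    star a ⬝ᵥ (∑ γ, c γ • vecMulVec (w γ) (star (w γ))).mulVec a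
      = ∑ γ, c γ * ((star (w γ) ⬝ᵥ a) * (star a ⬝ᵥ w γ)) := by
  simp only [Matrix.mulVec, dotProduct, Matrix.sum_apply, Matrix.smul_apply,
    Matrix.vecMulVec_apply, smul_eq_mul, Pi.star_apply, Finset.mul_sum, Finset.sum_mul]
  calc ∑ x : ι, ∑ x1 : ι, ∑ γ : Fin G, star (a x) * (c γ * (w γ x * star (w γ x1)) * a x1)
      = ∑ x : ι, ∑ γ : Fin G, ∑ x1 : ι, star (a x) * (c γ * (w γ x * star (w γ x1)) * a x1) :=
        sum_congr rfl fun x _ => Finset.sum_comm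
    _ = ∑ γ : Fin G, ∑ x : ι, ∑ x1 : ι, star (a x) * (c γ * (w γ x * star (w γ x1)) * a x1) :=
        Finset.sum_comm
    _ = ∑ γ : Fin G, ∑ x1 : ι, ∑ i : ι, c γ * (star (w γ i) * a i * (star (a x1) * w γ x1)) := by
        refine sum_congr rfl fun γ _ => sum_congr rfl fun s _ => sum_congr rfl fun t _ => ?_
        ring

set_option maxHeartbeats 1000000 in
theorem stmt_13 {m n : Type*} [Fintype m] [Fintype n] (G k r : ℕ)
    (P : Fin G → ℝ) (hP : ∀ γ, 0 ≤ P γ)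
    (φ : Fin G → (m × n → ℂ))
    (hrank : ∀ γ, ∃ (B : Fin k → ℂ) (x : Fin k → m → ℂ) (y : Fin k → n → ℂ),
      φ γ = ∑ β, B β • tensV (x β) (y β))
    (ρ : Matrix (m × n) (m × n) ℂ)
    (hρ : ρ = ∑ γ, (P γ : ℂ) • Matrix.vecMulVec (φ γ) (star (φ γ)))
    (htr : ρ.trace = 1)
    (A : Fin r → ℂ) (u : Fin r → m → ℂ) (v : Fin r → n → ℂ)
    (hu : ∀ α β, star (u α) ⬝ᵥ u β = if α = β then 1 else 0)
    (hv : ∀ α β, star (v α) ⬝ᵥ v β = if α = β then 1 else 0)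
    (hord : ∀ α β : Fin r, α ≤ β → ‖A β‖ ≤ ‖A α‖)
    (ψ₀ : m × n → ℂ) (hψ₀ : ψ₀ = ∑ α, A α • tensV (u α) (v α))
    (hnorm : star ψ₀ ⬝ᵥ ψ₀ = 1)
    (δ : ℝ) (hexp : 1 - δ ≤ (star ψ₀ ⬝ᵥ ρ.mulVec ψ₀).re) :
    ∑ α ∈ Finset.univ.filter (fun α : Fin r => k ≤ (α : ℕ)), ‖A α‖ ^ 2 ≤ δ := by
  classical
  set uE : Fin r → EuclideanSpace ℂ m := fun α => toE (u α) with huE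
  set vE : Fin r → EuclideanSpace ℂ n := fun α => toE (v α) with hvE
  have huO : Orthonormal ℂ uE := by
    rw [orthonormal_iff_ite]
    intro i j
    exact (inner_toE _ _).trans (hu i j)
  have hvO : Orthonormal ℂ vE := by
    rw [orthonormal_iff_ite]
    intro i j
    exact (inner_toE _ _).trans (hv i j)
  set ψE : EuclideanSpace ℂ (m × n) := toE ψ₀ with hψE
  have hψsum : ψE = ∑ α, A α • toE (tensV (uE α) (vE α)) :=
    (congrArg toE hψ₀).trans (toE_sum _ _)
  set S : ℝ := ∑ α ∈ Finset.univ.filter (fun α : Fin r => (α : ℕ) < k), ‖A α‖ ^ 2 with hSdef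
  -- total norm 1
  have hA1 : ∑ α, ‖A α‖ ^ 2 = 1 := by
    have h1 : ⟪ψE, ψE⟫_ℂ = 1 := (inner_toE _ _).trans hnorm
    rw [hψsum, inner_sum_tens A A uE uE vE hvO] at h1
    have huu : ∀ α : Fin r, ⟪uE α, uE α⟫_ℂ = 1 := by
      intro α
      have := hu α α
      exact (inner_toE _ _).trans (this.trans (if_pos rfl))
    have h2 : ((∑ α, ‖A α‖ ^ 2 : ℝ) : ℂ) = 1 := by
      rw [← h1]
      push_cast
      refine Finset.sum_congr rfl fun α _ => ?_
      rw [huu α, mul_one, RCLike.conj_mul]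
      norm_cast
    exact_mod_cast h2
  -- trace is sum of weighted norms
  have htrace : ∑ γ, P γ * ‖toE (φ γ)‖ ^ 2 = 1 := by
    have hvmv : ∀ a : m × n → ℂ,
        Matrix.trace (Matrix.vecMulVec a (star a)) = ⟪toE a, toE a⟫_ℂ := by
      intro a
      simp only [Matrix.trace, Matrix.diag, Matrix.vecMulVec_apply, PiLp.inner_apply,
        RCLike.inner_apply, toE, PiLp.toLp_apply, Pi.star_apply, RCLike.star_def]
    have h := htr
    rw [hρ, Matrix.trace_sum] at h
    have h2 : ((∑ γ, P γ * ‖toE (φ γ)‖ ^ 2 : ℝ) : ℂ) = 1 := by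
      rw [← h]
      push_cast
      refine Finset.sum_congr rfl fun γ _ => ?_
      rw [Matrix.trace_smul, hvmv (φ γ), inner_self_eq_norm_sq_to_K, smul_eq_mul]
      norm_cast
      exact Complex.ofReal_mul _ _
    exact_mod_cast h2
  -- expectation value
  have hquad : star ψ₀ ⬝ᵥ ρ.mulVec ψ₀
      = ∑ γ, (P γ : ℂ) * ((star (φ γ) ⬝ᵥ ψ₀) * (star ψ₀ ⬝ᵥ (φ γ))) := by
    rw [hρ]
    exact quad (fun γ => (P γ : ℂ)) φ ψ₀
  have hexp2 : ((∑ γ, P γ * ‖⟪toE (φ γ), ψE⟫_ℂ‖ ^ 2 : ℝ) : ℂ)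
      = star ψ₀ ⬝ᵥ ρ.mulVec ψ₀ := by
    rw [hquad]
    push_cast
    refine Finset.sum_congr rfl fun γ _ => ?_
    have e1 : star (φ γ) ⬝ᵥ ψ₀ = ⟪toE (φ γ), ψE⟫_ℂ := (inner_toE _ _).symm
    have e2 : star ψ₀ ⬝ᵥ (φ γ) = ⟪ψE, toE (φ γ)⟫_ℂ := (inner_toE _ _).symm
    rw [e1, e2, ← inner_conj_symm ψE (toE (φ γ)), RCLike.mul_conj]
    norm_cast
    exact Complex.ofReal_mul _ _
  have hre : 1 - δ ≤ ∑ γ, P γ * ‖⟪toE (φ γ), ψE⟫_ℂ‖ ^ 2 := by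
    have := hexp
    rw [← hexp2] at this
    rwa [Complex.ofReal_re] at this
  -- per-γ bound
  have hkey : ∀ γ, ‖⟪toE (φ γ), ψE⟫_ℂ‖ ^ 2 ≤ ‖toE (φ γ)‖ ^ 2 * S := by
    intro γ
    obtain ⟨B, x, y, hphi⟩ := hrank γ
    have h := key_bound A uE vE huO hvO hord (toE (φ γ)) B
      (fun β => toE (x β)) (fun β => toE (y β)) ((congrArg toE hphi).trans (toE_sum _ _))
    rw [← hψsum] at h
    exact h
  have hsum1 : ∑ γ, P γ * ‖⟪toE (φ γ), ψE⟫_ℂ‖ ^ 2 ≤ S := by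
    calc ∑ γ, P γ * ‖⟪toE (φ γ), ψE⟫_ℂ‖ ^ 2
        ≤ ∑ γ, P γ * (‖toE (φ γ)‖ ^ 2 * S) :=
          Finset.sum_le_sum fun γ _ => mul_le_mul_of_nonneg_left (hkey γ) (hP γ)
      _ = (∑ γ, P γ * ‖toE (φ γ)‖ ^ 2) * S := by
          rw [Finset.sum_mul]
          exact Finset.sum_congr rfl fun γ _ => by ring
      _ = S := by rw [htrace, one_mul]
  have hS : 1 - δ ≤ S := le_trans hre hsum1
  have hsplit := Finset.sum_filter_add_sum_filter_not Finset.univ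
    (fun α : Fin r => (α : ℕ) < k) (fun α => ‖A α‖ ^ 2)
  have hfe : Finset.univ.filter (fun α : Fin r => k ≤ (α : ℕ))
      = Finset.univ.filter (fun α : Fin r => ¬ (α : ℕ) < k) := by
    ext α
    simp [not_lt]
  rw [hfe]
  have : S + ∑ α ∈ Finset.univ.filter (fun α : Fin r => ¬ (α : ℕ) < k), ‖A α‖ ^ 2 = 1 := by
    rw [hSdef]
    rw [hsplit]
    exact hA1
  linarith
end
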